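/- (ZF + 𝒞_{ω₁} is a normal filter on ω₁) If 𝒞_{ω₁} is an ultrafilter on ω₁, then there is no ω₁-sequence of distinct reals, i.e., no injection from ω₁ into ω^ω (equivalently, into the powerset of ω). -/

import Mathlib

noncomputable section
open Set

/-- The first uncountable ordinal. -/
def omega1 : Ordinal := (Cardinal.aleph 1).ord

/-- `δ` is a limit point of `D`. -/
def IsLimitPoint (D : Set Ordinal) (δ : Ordinal) : Prop :=
  0 < δ ∧ ∀ β < δ, ∃ ξ ∈ D, β < ξ ∧ ξ < δ

/-- `D` is a club subset of `ω₁`. -/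
def IsClubSet (D : Set Ordinal) : Prop :=
  (∀ ξ ∈ D, ξ < omega1) ∧ (∀ β < omega1, ∃ ξ ∈ D, β < ξ) ∧
    (∀ δ < omega1, IsLimitPoint D δ → δ ∈ D)

/-- `X` measures `Y` (both of supremum `δ`). -/
def Measures (X Y : Set Ordinal) (δ : Ordinal) : Prop :=
  ∃ β < δ, ({ξ ∈ X | β ≤ ξ} ⊆ Y ∨ ∀ ξ ∈ X, β ≤ ξ → ξ ∉ Y)

/-- `c` is a closed cofinal subset of the limit ordinal `α`. -/
def IsClosedCofinalIn (c : Set Ordinal) (α : Ordinal) : Prop :=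
  (∀ ξ ∈ c, ξ < α) ∧ (∀ β < α, ∃ ξ ∈ c, β < ξ) ∧
    (∀ γ < α, IsLimitPoint c γ → γ ∈ c)

/-- A set of ordinals has order type `ω`. -/
def HasOrderTypeOmega (L : Set Ordinal) : Prop :=
  L.Infinite ∧ ∀ γ ∈ L, (L ∩ Set.Iio γ).Finite

/-- X belongs to the club filter on ω₁. -/
def InClubFilter (X : Set Ordinal) : Prop := ∃ C, IsClubSet C ∧ C ⊆ X

/-- S is a stationary subset of ω₁. -/
def IsStationarySet (S : Set Ordinal) : Prop := ∀ C, IsClubSet C → (S ∩ C).Nonempty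

/-- The diagonal intersection of an ω₁-sequence of sets. -/
def DiagInter (W : Ordinal → Set Ordinal) : Set Ordinal :=
  {δ | δ < omega1 ∧ ∀ α < δ, δ ∈ W α}

/-- The club filter is normal (closed under diagonal intersections). -/
def ClubFilterNormal : Prop :=
  ∀ W : Ordinal.{0} → Set Ordinal.{0}, (∀ α, α < omega1 → InClubFilter (W α)) →
    InClubFilter (DiagInter W)

/-- The club filter is an ultrafilter on ω₁. -/
def ClubFilterUltra : Prop :=
  ∀ X : Set Ordinal.{0}, X ⊆ Set.Iio omega1 →
    InClubFilter X ∨ InClubFilter (Set.Iio omega1 \ X)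


lemma omega1_isLimit : Order.IsSuccLimit omega1 :=
  Cardinal.isSuccLimit_ord (Cardinal.aleph0_le_aleph 1)

lemma omega0_lt_omega1 : Ordinal.omega0 < omega1 := by
  rw [← Cardinal.ord_aleph0]
  exact Cardinal.ord_lt_ord.2 (by simpa using Cardinal.aleph_lt_aleph.2 (zero_lt_one))

lemma isClub_Iio : IsClubSet (Set.Iio omega1) :=
  ⟨fun ξ hξ => hξ, fun β hβ => ⟨β + 1, (Ordinal.add_one_eq_succ β ▸ omega1_isLimit.succ_lt hβ), lt_add_one β⟩,
    fun δ hδ _ => hδ⟩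

lemma lift_omega1 : Ordinal.lift.{u, 0} omega1.{0} = omega1.{u} := by
  rw [omega1, Cardinal.lift_ord, Cardinal.lift_aleph, Ordinal.lift_one]
  rfl

/-- The universe-zero core of the result. -/
lemma no_omega1_sequence_of_reals_zero (hN : ClubFilterNormal) (hU : ClubFilterUltra) :
    ¬ ∃ x : Ordinal.{0} → Set ℕ, Set.InjOn x (Set.Iio omega1) := by
  classical
  rintro ⟨x, hx⟩
  set X : ℕ → Set Ordinal.{0} := fun n => {α | α < omega1 ∧ n ∈ x α} with hX
  set t : ℕ → Prop := fun n => InClubFilter (X n) with ht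
  set Y : ℕ → Set Ordinal.{0} := fun n =>
    if t n then X n else Set.Iio omega1 \ X n with hY
  have hYfilter : ∀ n, InClubFilter (Y n) := by
    intro n
    by_cases h : t n
    · simp only [hY, if_pos h]
      exact h
    · rcases hU (X n) (fun α hα => hα.1) with h1 | h2
      · exact absurd h1 h
      · simpa [hY, h] using h2
  have hYkey : ∀ n δ, δ ∈ Y n → δ < omega1 → (n ∈ x δ ↔ t n) := by
    intro n δ hδ hδ1
    by_cases h : t n
    · simp only [hY, if_pos h] at hδ
      exact ⟨fun _ => h, fun _ => hδ.2⟩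
    · simp only [hY, if_neg h] at hδ
      exact ⟨fun hn => absurd ⟨hδ1, hn⟩ hδ.2, fun hn => absurd hn h⟩
  set W : Ordinal.{0} → Set Ordinal.{0} := fun α =>
    if h : ∃ n : ℕ, (n : Ordinal) = α then Y h.choose else Set.Iio omega1 with hW
  have hWfilter : ∀ α, α < omega1 → InClubFilter (W α) := by
    intro α _
    by_cases h : ∃ n : ℕ, (n : Ordinal) = α
    · simp only [hW, dif_pos h]
      exact hYfilter _
    · simp only [hW, dif_neg h]
      exact ⟨Set.Iio omega1, isClub_Iio, subset_rfl⟩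
  have hWnat : ∀ n : ℕ, W (n : Ordinal) = Y n := by
    intro n
    have h : ∃ m : ℕ, (m : Ordinal) = (n : Ordinal) := ⟨n, rfl⟩
    have hch : h.choose = n := Nat.cast_injective h.choose_spec
    simp only [hW, dif_pos h]
    exact congrArg Y hch
  obtain ⟨C, hC, hCsub⟩ := hN W hWfilter
  obtain ⟨δ₁, hδ₁C, hδ₁⟩ := hC.2.1 Ordinal.omega0 omega0_lt_omega1
  have hδ₁lt : δ₁ < omega1 := hC.1 _ hδ₁C
  obtain ⟨δ₂, hδ₂C, hδ₂⟩ := hC.2.1 δ₁ hδ₁lt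
  have hδ₂lt : δ₂ < omega1 := hC.1 _ hδ₂C
  have key : ∀ δ, δ ∈ C → Ordinal.omega0 < δ → x δ = {n | t n} := by
    intro δ hδC hωδ
    have hδD := hCsub hδC
    ext n
    have hnδ : (n : Ordinal) < δ := (Ordinal.nat_lt_omega0 n).trans hωδ
    have hmem := hδD.2 (n : Ordinal) hnδ
    rw [hWnat n] at hmem
    exact hYkey n δ hmem hδD.1
  have : δ₁ = δ₂ := hx hδ₁lt hδ₂lt
    (by rw [key δ₁ hδ₁C hδ₁, key δ₂ hδ₂C (hδ₁.trans hδ₂)])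
  exact absurd this (ne_of_lt hδ₂)

/-- (ZF + normality) If the club filter is an ultrafilter on ω₁, then there is
no ω₁-sequence of distinct reals. -/
theorem no_omega1_sequence_of_reals (hN : ClubFilterNormal) (hU : ClubFilterUltra) :
    ¬ ∃ x : Ordinal → Set ℕ, Set.InjOn x (Set.Iio omega1) := by
  rintro ⟨x, hx⟩
  refine no_omega1_sequence_of_reals_zero hN hU ⟨fun α => x (Ordinal.lift α), ?_⟩
  intro α hα β hβ h
  have hα' : Ordinal.lift α < omega1 := by
    rw [← lift_omega1]; exact Ordinal.lift_lt.2 hα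
  have hβ' : Ordinal.lift β < omega1 := by
    rw [← lift_omega1]; exact Ordinal.lift_lt.2 hβ
  exact Ordinal.lift_inj.1 (hx hα' hβ' h)
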